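/- Let q be prime and δ > 0. There exists ε(δ) > 0 depending only on δ and q such that: for any finite set Y and jointly distributed random variables (X₁,Y₁), (X₂,Y₂) with values in (ℤ/qℤ) × Y, where (X₁,Y₁) is independent of (X₂,Y₂), if H(X₁|Y₁), H(X₂|Y₂) ∈ (δ, 1−δ) (conditional entropies in base q), then H(X₁ + X₂ | Y₁, Y₂) − max{H(X₁|Y₁), H(X₂|Y₂)} ≥ ε(δ). -/

import Mathlib

/-- Conditional entropy `H(X|Y)` in base `q` of a joint distribution `P` on `A × Y`. -/
noncomputable def condEntq (q : ℕ) {A Y : Type*} [Fintype A] [Fintype Y]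
    (P : A × Y → ℝ) : ℝ :=
  -∑ x, ∑ y, P (x, y) * Real.logb q (P (x, y) / ∑ x', P (x', y))

set_option linter.unusedSectionVars false
set_option linter.unusedVariables false

open Finset Real

namespace Stmt11

variable {q : ℕ} [NeZero q]


variable {q : ℕ} [NeZero q]

noncomputable def ent (p : ZMod q → ℝ) : ℝ := ∑ s, Real.negMulLog (p s)

noncomputable def conv (p r : ZMod q → ℝ) : ZMod q → ℝ := fun s => ∑ x, p x * r (s - x)

def IsDist (p : ZMod q → ℝ) : Prop := (∀ s, 0 ≤ p s) ∧ ∑ s, p s = 1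

lemma sum_translate (f : ZMod q → ℝ) (y : ZMod q) : ∑ s, f (s - y) = ∑ s, f s :=
  Fintype.sum_equiv (Equiv.subRight y) _ _ (fun _ => rfl)

lemma conv_eq (p r : ZMod q → ℝ) (s : ZMod q) : conv p r s = ∑ y, r y * p (s - y) := by
  rw [conv]
  exact (Fintype.sum_equiv (Equiv.subLeft s) _ _ (fun y => by
    simp [Equiv.subLeft, mul_comm])).symm

lemma conv_comm (p r : ZMod q → ℝ) : conv p r = conv r p := by
  funext s; rw [conv_eq, conv]

lemma IsDist.le_one {p : ZMod q → ℝ} (hp : IsDist p) (s : ZMod q) : p s ≤ 1 := by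
  rw [← hp.2]
  exact Finset.single_le_sum (f := p) (fun i _ => hp.1 i) (mem_univ s)

lemma isDist_conv {p r : ZMod q → ℝ} (hp : IsDist p) (hr : IsDist r) : IsDist (conv p r) := by
  constructor
  · intro s
    exact Finset.sum_nonneg fun x _ => mul_nonneg (hp.1 x) (hr.1 _)
  · rw [show (∑ s, conv p r s) = ∑ s, ∑ x, p x * r (s - x) from rfl, Finset.sum_comm]
    have : ∀ x, ∑ s, p x * r (s - x) = p x := by
      intro x
      rw [← Finset.mul_sum, sum_translate r x, hr.2, mul_one]
    simp only [this, hp.2]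

lemma ent_nonneg {p : ZMod q → ℝ} (hp : IsDist p) : 0 ≤ ent p :=
  Finset.sum_nonneg fun s _ => Real.negMulLog_nonneg (hp.1 s) (hp.le_one s)

lemma card_zmod : (Fintype.card (ZMod q) : ℝ) = (q : ℝ) := by
  rw [ZMod.card]

lemma ent_le_log {p : ZMod q → ℝ} (hp : IsDist p) : ent p ≤ Real.log q := by
  have hq1 : 1 ≤ q := Nat.one_le_iff_ne_zero.mpr (NeZero.ne q)
  have hq0 : (0:ℝ) < (q:ℝ) := by exact_mod_cast hq1
  have h := Real.concaveOn_negMulLog.le_map_sum (t := (univ : Finset (ZMod q)))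
    (w := fun _ => (q:ℝ)⁻¹) (p := p) (fun _ _ => by positivity)
    (by rw [Finset.sum_const, card_univ, nsmul_eq_mul, card_zmod]; field_simp) (fun i _ => hp.1 i)
  simp only [smul_eq_mul, ← Finset.mul_sum, hp.2, mul_one] at h
  have : Real.negMulLog (q:ℝ)⁻¹ = (q:ℝ)⁻¹ * Real.log q := by
    rw [Real.negMulLog, Real.log_inv]; ring
  rw [this] at h
  calc ent p = (q:ℝ) * ((q:ℝ)⁻¹ * ∑ s, Real.negMulLog (p s)) := by field_simp [ent]; rfl
  _ ≤ (q:ℝ) * ((q:ℝ)⁻¹ * Real.log q) := by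
      apply mul_le_mul_of_nonneg_left _ hq0.le
      rw [Finset.mul_sum] at h ⊢; exact h
  _ = Real.log q := by field_simp

lemma ent_const {p : ZMod q → ℝ} (hp : IsDist p) (hc : ∀ a b : ZMod q, p a = p b) :
    ent p = Real.log q := by
  have hq1 : 1 ≤ q := Nat.one_le_iff_ne_zero.mpr (NeZero.ne q)
  have hq0 : (0:ℝ) < (q:ℝ) := by exact_mod_cast hq1
  have hval : ∀ a, p a = (q:ℝ)⁻¹ := by
    intro a
    have : ∑ s, p s = (q:ℝ) * p a := by
      rw [Finset.sum_congr rfl (fun s _ => hc s a), Finset.sum_const, card_univ, nsmul_eq_mul,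
        card_zmod]
    have h1 := hp.2
    rw [this] at h1
    field_simp at h1 ⊢
    linarith
  rw [ent]
  simp only [hval]
  rw [Finset.sum_const, card_univ, nsmul_eq_mul, card_zmod, Real.negMulLog, Real.log_inv]
  field_simp

-- weak per-point Jensen
lemma jensen_weak {p r : ZMod q → ℝ} (hp : IsDist p) (hr : IsDist r) (s : ZMod q) :
    ∑ y, r y * Real.negMulLog (p (s - y)) ≤ Real.negMulLog (conv p r s) := by
  rw [conv_eq]
  have h := Real.concaveOn_negMulLog.le_map_sum (t := (univ : Finset (ZMod q)))
    (w := r) (p := fun y => p (s - y)) (fun i _ => hr.1 i) hr.2 (fun i _ => hp.1 _)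
  simpa using h

lemma double_sum_ent {p r : ZMod q → ℝ} (hr : IsDist r) :
    ∑ s, ∑ y, r y * Real.negMulLog (p (s - y)) = ent p := by
  rw [Finset.sum_comm]
  have : ∀ y, ∑ s, r y * Real.negMulLog (p (s - y)) = r y * ent p := by
    intro y
    rw [← Finset.mul_sum, show (∑ s, Real.negMulLog (p (s - y))) = ent p from
      sum_translate (fun t => Real.negMulLog (p t)) y]
  simp only [this, ← Finset.sum_mul, hr.2, one_mul]

lemma ent_le_ent_conv {p r : ZMod q → ℝ} (hp : IsDist p) (hr : IsDist r) :
    ent p ≤ ent (conv p r) := by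
  rw [← double_sum_ent (p := p) hr, ent]
  exact Finset.sum_le_sum fun s _ => jensen_weak hp hr s

-- p invariant under translation by d ≠ 0 is constant (q prime)
lemma const_of_invariant (hq : q.Prime) {p : ZMod q → ℝ} {d : ZMod q} (hd : d ≠ 0)
    (h : ∀ x, p x = p (x + d)) : ∀ a b : ZMod q, p a = p b := by
  haveI : Fact q.Prime := ⟨hq⟩
  have key : ∀ n : ℕ, ∀ x, p x = p (x + (n : ZMod q) * d) := by
    intro n
    induction n with
    | zero => simp
    | succ m ih =>
      intro x
      rw [ih x, h (x + (m : ZMod q) * d)]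
      push_cast
      ring_nf
  intro a b
  have := key ((b - a) * d⁻¹).val a
  rwa [ZMod.natCast_val, ZMod.cast_id, mul_assoc, inv_mul_cancel₀ hd, mul_one,
    add_sub_cancel] at this

lemma exists_wit (hq : q.Prime) {p : ZMod q → ℝ} (hpne : ¬ ∀ a b : ZMod q, p a = p b)
    {y₁ y₂ : ZMod q} (hne : y₁ ≠ y₂) : ∃ s₀, p (s₀ - y₁) ≠ p (s₀ - y₂) := by
  by_contra hcon
  push_neg at hcon
  apply hpne
  apply const_of_invariant hq (d := y₁ - y₂) (sub_ne_zero.mpr hne)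
  intro x
  have := hcon (x + y₁)
  rw [add_sub_cancel_right] at this
  rw [this]
  ring_nf

lemma ent_lt_ent_conv (hq : q.Prime) {p r : ZMod q → ℝ} (hp : IsDist p) (hr : IsDist r)
    (hpne : ¬ ∀ a b : ZMod q, p a = p b)
    (hr2 : ∃ y₁ y₂, y₁ ≠ y₂ ∧ 0 < r y₁ ∧ 0 < r y₂) :
    ent p < ent (conv p r) := by
  obtain ⟨y₁, y₂, hne, hr1, hr2'⟩ := hr2
  obtain ⟨s₀, hs₀⟩ := exists_wit hq hpne hne
  rw [← double_sum_ent (p := p) hr, ent]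
  apply Finset.sum_lt_sum (fun s _ => jensen_weak hp hr s)
  refine ⟨s₀, mem_univ _, ?_⟩
  rw [conv_eq]
  set t := univ.filter (fun y => 0 < r y) with ht
  have hmemt : ∀ y, y ∈ t ↔ 0 < r y := by intro y; simp [ht]
  have hzero : ∀ y ∈ univ, y ∉ t → r y * p (s₀ - y) = 0 := by
    intro y _ hy
    have : r y = 0 := le_antisymm (by simpa [hmemt] using hy) (hr.1 y)
    simp [this]
  have hzero' : ∀ y ∈ univ, y ∉ t → r y * Real.negMulLog (p (s₀ - y)) = 0 := by
    intro y _ hy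
    have : r y = 0 := le_antisymm (by simpa [hmemt] using hy) (hr.1 y)
    simp [this]
  have hsum1 : ∑ y ∈ t, r y = 1 := by
    rw [Finset.sum_subset (Finset.subset_univ t) (fun y _ hy => le_antisymm
      (by simpa [hmemt] using hy) (hr.1 y))]
    exact hr.2
  have h := Real.strictConcaveOn_negMulLog.lt_map_sum (t := t) (w := r)
    (p := fun y => p (s₀ - y)) (fun i hi => (hmemt i).mp hi) hsum1
    (fun i _ => hp.1 _)
    ⟨y₁, (hmemt y₁).mpr hr1, y₂, (hmemt y₂).mpr hr2', hs₀⟩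
  simp only [smul_eq_mul] at h
  rwa [Finset.sum_subset (Finset.subset_univ t) hzero',
    Finset.sum_subset (Finset.subset_univ t) hzero] at h

lemma isDist_iff_mem (p : ZMod q → ℝ) : IsDist p ↔ p ∈ stdSimplex ℝ (ZMod q) := Iff.rfl

lemma two_support {r : ZMod q → ℝ} (hr : IsDist r) (h : 0 < ent r) :
    ∃ y₁ y₂, y₁ ≠ y₂ ∧ 0 < r y₁ ∧ 0 < r y₂ := by
  have h1 : ∃ y ∈ (univ : Finset (ZMod q)), (0:ℝ) < Real.negMulLog (r y) := by
    apply Finset.exists_lt_of_sum_lt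
    simpa [ent] using h
  obtain ⟨y₁, -, hy₁⟩ := h1
  have hr1 : 0 < r y₁ := by
    rcases lt_or_eq_of_le (hr.1 y₁) with h' | h'
    · exact h'
    · exfalso; rw [← h'] at hy₁; simp [Real.negMulLog] at hy₁
  have hrlt : r y₁ < 1 := by
    by_contra hge
    push_neg at hge
    have hlog : 0 ≤ Real.log (r y₁) := Real.log_nonneg hge
    have hkey : Real.negMulLog (r y₁) ≤ 0 := by
      rw [Real.negMulLog]; nlinarith
    linarith
  have hsum : ∑ y ∈ univ.erase y₁, r y = 1 - r y₁ := by
    have h0 := Finset.sum_erase_add univ r (mem_univ y₁)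
    rw [hr.2] at h0
    linarith
  have h2 : ∃ y ∈ univ.erase y₁, (0:ℝ) < r y := by
    apply Finset.exists_lt_of_sum_lt
    rw [hsum]
    simpa using hrlt
  obtain ⟨y₂, hy₂mem, hy₂⟩ := h2
  exact ⟨y₂, y₁, Finset.ne_of_mem_erase hy₂mem, hy₂, hr1⟩

lemma continuous_ent : Continuous (ent (q := q)) :=
  continuous_finset_sum _ fun s _ => Real.continuous_negMulLog.comp (continuous_apply s)

lemma continuous_entconv :
    Continuous (fun pr : (ZMod q → ℝ) × (ZMod q → ℝ) => ent (conv pr.1 pr.2)) := by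
  apply continuous_finset_sum
  intro s _
  apply Real.continuous_negMulLog.comp
  apply continuous_finset_sum
  intro x _
  exact ((continuous_apply x).comp continuous_fst).mul
    ((continuous_apply (s - x)).comp continuous_snd)

lemma exists_M (hq : q.Prime) {η : ℝ} (hη0 : 0 < η) (hη : η ≤ 1/4) :
    ∃ M > 0, ∀ p r : ZMod q → ℝ, IsDist p → IsDist r →
      ent p ≤ (1 - η) * Real.log q → η * Real.log q ≤ ent r →
      ent p + M ≤ ent (conv p r) := by
  have hq2 : (1:ℝ) < (q:ℝ) := by exact_mod_cast hq.one_lt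
  have hL : 0 < Real.log q := Real.log_pos hq2
  set L := Real.log q with hLdef
  set K : Set ((ZMod q → ℝ) × (ZMod q → ℝ)) :=
    (stdSimplex ℝ (ZMod q) ∩ {p | ent p ≤ (1 - η) * L}) ×ˢ
    (stdSimplex ℝ (ZMod q) ∩ {r | η * L ≤ ent r}) with hK
  have hKc : IsCompact K := by
    apply IsCompact.prod
    · exact (isCompact_stdSimplex _ _).inter_right
        (isClosed_le continuous_ent continuous_const)
    · exact (isCompact_stdSimplex _ _).inter_right
        (isClosed_le continuous_const continuous_ent)
  have hKne : K.Nonempty := by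
    refine ⟨⟨fun x => if x = 0 then 1 else 0, fun _ => (q:ℝ)⁻¹⟩, ?_, ?_⟩
    · constructor
      · constructor
        · intro x; dsimp only; split <;> norm_num
        · simp
      · have : ent (q := q) (fun x => if x = 0 then 1 else 0) = 0 := by
          rw [ent]
          apply Finset.sum_eq_zero
          intro x _
          split <;> simp
        rw [Set.mem_setOf_eq, this]
        nlinarith
    · have hent : ent (q := q) (fun _ => (q:ℝ)⁻¹) = L := by
        rw [ent, Finset.sum_const, card_univ, nsmul_eq_mul, card_zmod,
          Real.negMulLog, Real.log_inv, hLdef]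
        field_simp
      constructor
      · constructor
        · intro x; positivity
        · rw [Finset.sum_const, card_univ, nsmul_eq_mul, card_zmod]
          field_simp
      · rw [Set.mem_setOf_eq, hent]
        nlinarith
  have hcont : ContinuousOn
      (fun pr : (ZMod q → ℝ) × (ZMod q → ℝ) => ent (conv pr.1 pr.2) - ent pr.1) K :=
    (continuous_entconv.sub (continuous_ent.comp continuous_fst)).continuousOn
  obtain ⟨z, hzK, hzmin⟩ := hKc.exists_isMinOn hKne hcont
  obtain ⟨⟨hz1d, hz1e⟩, ⟨hz2d, hz2e⟩⟩ := hzK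
  have hz1d' : IsDist z.1 := hz1d
  have hz2d' : IsDist z.2 := hz2d
  refine ⟨ent (conv z.1 z.2) - ent z.1, ?_, ?_⟩
  · have hpne : ¬ ∀ a b : ZMod q, z.1 a = z.1 b := by
      intro hc
      have hcc := ent_const hz1d' hc
      rw [Set.mem_setOf_eq, hcc] at hz1e
      nlinarith
    rw [Set.mem_setOf_eq] at hz2e
    have h2 : 0 < ent z.2 := lt_of_lt_of_le (by positivity) hz2e
    have := ent_lt_ent_conv hq hz1d' hz2d' hpne (two_support hz2d' h2)
    linarith
  · intro p r hp hr hpe hre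
    have hmem : (p, r) ∈ K := ⟨⟨hp, hpe⟩, ⟨hr, hre⟩⟩
    have := hzmin hmem
    simp only [Set.mem_setOf_eq] at this
    linarith [this]

/-- normalized entropy -/
noncomputable def nent (p : ZMod q → ℝ) : ℝ := ent p / Real.log q


section YY
variable {Y : Type} [Fintype Y]
noncomputable def wgt (P : ZMod q × Y → ℝ) (y : Y) : ℝ := ∑ x, P (x, y)
noncomputable def cnd (P : ZMod q × Y → ℝ) (y : Y) : ZMod q → ℝ := fun x => P (x, y) / wgt P y

lemma wgt_nonneg {P : ZMod q × Y → ℝ} (hP : ∀ z, 0 ≤ P z) (y : Y) : 0 ≤ wgt P y :=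
  Finset.sum_nonneg fun x _ => hP _

lemma wgt_zero {P : ZMod q × Y → ℝ} (hP : ∀ z, 0 ≤ P z) {y : Y} (h : wgt P y = 0)
    (x : ZMod q) : P (x, y) = 0 := by
  have := (Finset.sum_eq_zero_iff_of_nonneg (fun x _ => hP (x, y))).mp h
  exact this x (mem_univ x)

lemma isDist_cnd {P : ZMod q × Y → ℝ} (hP : ∀ z, 0 ≤ P z) {y : Y} (h : wgt P y ≠ 0) :
    IsDist (cnd P y) := by
  constructor
  · intro x
    exact div_nonneg (hP _) (wgt_nonneg hP y)
  · rw [show (∑ x, cnd P y x) = (∑ x, P (x, y)) / wgt P y from Finset.sum_div _ _ _ |>.symm]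
    rw [← wgt]
    field_simp

lemma sum_wgt {P : ZMod q × Y → ℝ} (h : ∑ z, P z = 1) : ∑ y, wgt P y = 1 := by
  rw [← h, Fintype.sum_prod_type]
  rw [Finset.sum_comm]
  rfl

lemma decomp (hq : q.Prime) (P : ZMod q × Y → ℝ) (hP : ∀ z, 0 ≤ P z) :
    condEntq q P = ∑ y, wgt P y * nent (cnd P y) := by
  have hq2 : (1:ℝ) < (q:ℝ) := by exact_mod_cast hq.one_lt
  have hL : 0 < Real.log q := Real.log_pos hq2
  rw [condEntq, ← Finset.sum_neg_distrib]
  have hsw : ∀ x : ZMod q, -∑ y, P (x, y) * Real.logb q (P (x, y) / ∑ x', P (x', y))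
      = ∑ y, -(P (x, y) * Real.logb q (P (x, y) / wgt P y)) := by
    intro x
    rw [← Finset.sum_neg_distrib]
    rfl
  rw [Finset.sum_congr rfl (fun x _ => hsw x), Finset.sum_comm]
  apply Finset.sum_congr rfl
  intro y _
  have key : ∀ x, -(P (x, y) * Real.logb q (P (x, y) / wgt P y))
      = wgt P y * (Real.negMulLog (cnd P y x) / Real.log q) := by
    intro x
    rcases eq_or_lt_of_le (wgt_nonneg hP y) with hw | hw
    · rw [← hw, wgt_zero hP hw.symm x]
      simp
    · rcases eq_or_lt_of_le (hP (x, y)) with hz | hz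
      · rw [← hz, cnd, ← hz]
        simp
      · rw [cnd, Real.negMulLog, Real.logb]
        field_simp
  rw [Finset.sum_congr rfl (fun x _ => key x), ← Finset.mul_sum, nent, ent,
    Finset.sum_div]


noncomputable def pconv (P1 P2 : ZMod q × Y → ℝ) : ZMod q × (Y × Y) → ℝ :=
  fun sy => ∑ x1, P1 (x1, sy.2.1) * P2 (sy.1 - x1, sy.2.2)

lemma pconv_nonneg {P1 P2 : ZMod q × Y → ℝ} (h1 : ∀ z, 0 ≤ P1 z) (h2 : ∀ z, 0 ≤ P2 z)
    (z : ZMod q × (Y × Y)) : 0 ≤ pconv P1 P2 z :=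
  Finset.sum_nonneg fun x _ => mul_nonneg (h1 _) (h2 _)

lemma wgt_pconv (P1 P2 : ZMod q × Y → ℝ) (y1 y2 : Y) :
    wgt (pconv P1 P2) (y1, y2) = wgt P1 y1 * wgt P2 y2 := by
  rw [wgt]
  show (∑ s, ∑ x, P1 (x, y1) * P2 (s - x, y2)) = _
  rw [Finset.sum_comm]
  have : ∀ x, ∑ s, P1 (x, y1) * P2 (s - x, y2) = P1 (x, y1) * wgt P2 y2 := by
    intro x
    rw [← Finset.mul_sum, sum_translate (fun u => P2 (u, y2)) x]
    rfl
  rw [Finset.sum_congr rfl (fun x _ => this x), ← Finset.sum_mul]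
  rfl

lemma cnd_pconv {P1 P2 : ZMod q × Y → ℝ} {y1 y2 : Y} (h1 : wgt P1 y1 ≠ 0)
    (h2 : wgt P2 y2 ≠ 0) :
    cnd (pconv P1 P2) (y1, y2) = conv (cnd P1 y1) (cnd P2 y2) := by
  funext s
  rw [cnd, wgt_pconv]
  show (∑ x, P1 (x, y1) * P2 (s - x, y2)) / _ = ∑ x, _
  rw [Finset.sum_div]
  apply Finset.sum_congr rfl
  intro x _
  rw [cnd, cnd]
  field_simp

end YY
lemma nent_nonneg {p : ZMod q → ℝ} (hq : q.Prime) (hp : IsDist p) : 0 ≤ nent p := by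
  have hL : 0 < Real.log q := Real.log_pos (by exact_mod_cast hq.one_lt)
  exact div_nonneg (ent_nonneg hp) hL.le

lemma nent_le_one {p : ZMod q → ℝ} (hq : q.Prime) (hp : IsDist p) : nent p ≤ 1 := by
  have hL : 0 < Real.log q := Real.log_pos (by exact_mod_cast hq.one_lt)
  rw [nent, div_le_one hL]
  exact ent_le_log hp

lemma key (hq : q.Prime) {η M : ℝ} (hη0 : 0 < η) (hM0 : 0 < M)
    (hM : ∀ p r : ZMod q → ℝ, IsDist p → IsDist r →
      ent p ≤ (1 - η) * Real.log q → η * Real.log q ≤ ent r →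
      ent p + M ≤ ent (conv p r))
    {p r : ZMod q → ℝ} (hp : IsDist p) (hr : IsDist r) :
    nent p + (M / Real.log q) * (max 0 (1 - nent p - η) * max 0 (nent r - η))
      ≤ nent (conv p r) := by
  have hL : 0 < Real.log q := Real.log_pos (by exact_mod_cast hq.one_lt)
  have hweak : nent p ≤ nent (conv p r) :=
    (div_le_div_iff_of_pos_right hL).mpr (ent_le_ent_conv hp hr)
  by_cases h1 : 1 - nent p - η ≤ 0
  · rw [max_eq_left h1, zero_mul, mul_zero]
    linarith
  by_cases h2 : nent r - η ≤ 0
  · rw [max_eq_left h2, mul_zero, mul_zero]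
    linarith
  push_neg at h1 h2
  have hv1 : max 0 (1 - nent p - η) ≤ 1 := by
    have := nent_nonneg hq hp
    apply max_le <;> linarith
  have hv2 : max 0 (nent r - η) ≤ 1 := by
    have := nent_le_one hq hr
    apply max_le <;> linarith
  have hv1' : 0 ≤ max 0 (1 - nent p - η) := le_max_left _ _
  have hv2' : 0 ≤ max 0 (nent r - η) := le_max_left _ _
  have hpe : ent p ≤ (1 - η) * Real.log q := by
    have : nent p ≤ 1 - η := by linarith
    rw [nent, div_le_iff₀ hL] at this
    linarith
  have hre : η * Real.log q ≤ ent r := by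
    have : η ≤ nent r := by linarith
    rw [nent, le_div_iff₀ hL] at this
    linarith
  have hchain := hM p r hp hr hpe hre
  have hmain : nent p + M / Real.log q ≤ nent (conv p r) := by
    rw [nent, nent, ← add_div]
    exact (div_le_div_iff_of_pos_right hL).mpr hchain
  have hcpos : 0 < M / Real.log q := div_pos hM0 hL
  have hprod : (max 0 (1 - nent p - η)) * (max 0 (nent r - η)) ≤ 1 := by nlinarith
  have := mul_le_mul_of_nonneg_left hprod hcpos.le
  linarith

lemma avg {Y : Type} [Fintype Y] (w a : Y → ℝ) (hw : ∀ y, 0 ≤ w y)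
    (hw1 : ∑ y, w y = 1) (η : ℝ) :
    max 0 ((∑ y, w y * a y) - η) ≤ ∑ y, w y * max 0 (a y - η) := by
  apply max_le
  · exact Finset.sum_nonneg fun y _ => mul_nonneg (hw y) (le_max_left _ _)
  · have h1 : ∑ y, w y * (a y - η) ≤ ∑ y, w y * max 0 (a y - η) :=
      Finset.sum_le_sum fun y _ => mul_le_mul_of_nonneg_left (le_max_right _ _) (hw y)
    have h2 : ∑ y, w y * (a y - η) = (∑ y, w y * a y) - η := by
      simp only [mul_sub, Finset.sum_sub_distrib, ← Finset.sum_mul, hw1, one_mul]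
    linarith

lemma prodsum {Y : Type} [Fintype Y] (f g : Y → ℝ) :
    ∑ y1, ∑ y2, f y1 * g y2 = (∑ y1, f y1) * (∑ y2, g y2) :=
  (Finset.sum_mul_sum _ _ _ _).symm


lemma bigsum {Y : Type} [Fintype Y] (f1 g1 f2 g2 : Y → ℝ) (c : ℝ) :
    ∑ y1, ∑ y2, (f1 y1 * g1 y2 + c * (f2 y1 * g2 y2))
      = (∑ y1, f1 y1) * (∑ y2, g1 y2) + c * ((∑ y1, f2 y1) * (∑ y2, g2 y2)) := by
  rw [← prodsum f1 g1, ← prodsum f2 g2]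
  simp only [Finset.mul_sum]
  rw [← Finset.sum_add_distrib]
  apply Finset.sum_congr rfl
  intro y1 _
  rw [← Finset.sum_add_distrib]


end Stmt11

open Stmt11 in
theorem stmt11 (q : ℕ) [NeZero q] (hq : q.Prime) (δ : ℝ) (hδ : 0 < δ) :
    ∃ ε > 0, ∀ (Y : Type) (_ : Fintype Y) (P1 P2 : ZMod q × Y → ℝ),
      (∀ z, 0 ≤ P1 z) → ∑ z, P1 z = 1 →
      (∀ z, 0 ≤ P2 z) → ∑ z, P2 z = 1 →
      condEntq q P1 ∈ Set.Ioo δ (1 - δ) →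
      condEntq q P2 ∈ Set.Ioo δ (1 - δ) →
      condEntq q
          (fun sy : ZMod q × (Y × Y) => ∑ x1, P1 (x1, sy.2.1) * P2 (sy.1 - x1, sy.2.2))
        - max (condEntq q P1) (condEntq q P2) ≥ ε := by
  have hL : 0 < Real.log q := Real.log_pos (by exact_mod_cast hq.one_lt)
  set η := min (δ/2) (1/4) with hηdef
  have hη0 : 0 < η := lt_min (by linarith) (by norm_num)
  have hη4 : η ≤ 1/4 := min_le_right _ _
  have hηδ : η ≤ δ/2 := min_le_left _ _
  obtain ⟨M, hM0, hM⟩ := exists_M hq hη0 hη4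
  refine ⟨(M / Real.log q) * (η * η), by positivity, ?_⟩
  intro Y instY P1 P2 h1n h1s h2n h2s hm1 hm2
  letI := instY
  set c := M / Real.log q with hc
  have hc0 : 0 < c := div_pos hM0 hL
  have hd1 := Stmt11.decomp hq P1 h1n
  have hd2 := Stmt11.decomp hq P2 h2n
  have hw1s := sum_wgt h1s
  have hw2s := sum_wgt h2s
  have hw1n : ∀ y, 0 ≤ wgt P1 y := wgt_nonneg h1n
  have hw2n : ∀ y, 0 ≤ wgt P2 y := wgt_nonneg h2n
  have hP3 : (fun sy : ZMod q × (Y × Y) => ∑ x1, P1 (x1, sy.2.1) * P2 (sy.1 - x1, sy.2.2))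
      = pconv P1 P2 := rfl
  obtain ⟨hm1l, hm1u⟩ := hm1
  obtain ⟨hm2l, hm2u⟩ := hm2
  rw [hd1] at hm1l hm1u
  rw [hd2] at hm2l hm2u
  rw [hP3, Stmt11.decomp hq (pconv P1 P2) (pconv_nonneg h1n h2n), hd1, hd2,
    Fintype.sum_prod_type]
  set m1 := ∑ y, wgt P1 y * nent (cnd P1 y) with hm1def
  set m2 := ∑ y, wgt P2 y * nent (cnd P2 y) with hm2def
  set S1a := ∑ y, wgt P1 y * max 0 (1 - nent (cnd P1 y) - η) with hS1a
  set S1b := ∑ y, wgt P1 y * max 0 (nent (cnd P1 y) - η) with hS1b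
  set S2a := ∑ y, wgt P2 y * max 0 (1 - nent (cnd P2 y) - η) with hS2a
  set S2b := ∑ y, wgt P2 y * max 0 (nent (cnd P2 y) - η) with hS2b
  -- sum bounds
  have hsum1 : ∀ (P : ZMod q × Y → ℝ), (∀ z, 0 ≤ P z) → (∑ z, P z = 1) →
      ∑ y, wgt P y * (1 - nent (cnd P y)) = 1 - ∑ y, wgt P y * nent (cnd P y) := by
    intro P hn hs
    simp only [mul_sub, mul_one, Finset.sum_sub_distrib, sum_wgt hs]
  have hS1a_ge : η ≤ S1a := by
    have h := avg (wgt P1) (fun y => 1 - nent (cnd P1 y)) hw1n hw1s η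
    rw [hsum1 P1 h1n h1s] at h
    have h2 : η ≤ max 0 (1 - m1 - η) := le_trans (by linarith) (le_max_right _ _)
    exact le_trans h2 h
  have hS2a_ge : η ≤ S2a := by
    have h := avg (wgt P2) (fun y => 1 - nent (cnd P2 y)) hw2n hw2s η
    rw [hsum1 P2 h2n h2s] at h
    have h2 : η ≤ max 0 (1 - m2 - η) := le_trans (by linarith) (le_max_right _ _)
    exact le_trans h2 h
  have hS1b_ge : η ≤ S1b := by
    have h := avg (wgt P1) (fun y => nent (cnd P1 y)) hw1n hw1s η
    have h2 : η ≤ max 0 (m1 - η) := le_trans (by linarith) (le_max_right _ _)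
    exact le_trans h2 h
  have hS2b_ge : η ≤ S2b := by
    have h := avg (wgt P2) (fun y => nent (cnd P2 y)) hw2n hw2s η
    have h2 : η ≤ max 0 (m2 - η) := le_trans (by linarith) (le_max_right _ _)
    exact le_trans h2 h
  -- claim A
  have hA : m1 + c * (S1a * S2b) ≤
      ∑ y1, ∑ y2, wgt (pconv P1 P2) (y1, y2) * nent (cnd (pconv P1 P2) (y1, y2)) := by
    have hterm : ∀ y1 y2,
        (wgt P1 y1 * nent (cnd P1 y1)) * wgt P2 y2
          + c * ((wgt P1 y1 * max 0 (1 - nent (cnd P1 y1) - η))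
            * (wgt P2 y2 * max 0 (nent (cnd P2 y2) - η)))
        ≤ wgt (pconv P1 P2) (y1, y2) * nent (cnd (pconv P1 P2) (y1, y2)) := by
      intro y1 y2
      rw [wgt_pconv]
      rcases eq_or_lt_of_le (hw1n y1) with h1 | h1
      · rw [← h1]; simp
      rcases eq_or_lt_of_le (hw2n y2) with h2 | h2
      · rw [← h2]; simp
      rw [cnd_pconv h1.ne' h2.ne']
      have hkey := key hq hη0 hM0 hM (isDist_cnd h1n h1.ne') (isDist_cnd h2n h2.ne')
      calc (wgt P1 y1 * nent (cnd P1 y1)) * wgt P2 y2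
          + c * ((wgt P1 y1 * max 0 (1 - nent (cnd P1 y1) - η))
            * (wgt P2 y2 * max 0 (nent (cnd P2 y2) - η)))
          = (wgt P1 y1 * wgt P2 y2) * (nent (cnd P1 y1)
            + c * (max 0 (1 - nent (cnd P1 y1) - η) * max 0 (nent (cnd P2 y2) - η))) := by
            ring
        _ ≤ (wgt P1 y1 * wgt P2 y2) * nent (conv (cnd P1 y1) (cnd P2 y2)) := by
            apply mul_le_mul_of_nonneg_left hkey
            exact mul_nonneg (hw1n y1) (hw2n y2)
    calc m1 + c * (S1a * S2b)
        = ∑ y1, ∑ y2, ((wgt P1 y1 * nent (cnd P1 y1)) * wgt P2 y2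
          + c * ((wgt P1 y1 * max 0 (1 - nent (cnd P1 y1) - η))
            * (wgt P2 y2 * max 0 (nent (cnd P2 y2) - η)))) := by
          rw [bigsum, hw2s, mul_one]
      _ ≤ _ := Finset.sum_le_sum fun y1 _ => Finset.sum_le_sum fun y2 _ => hterm y1 y2
  -- claim B
  have hB : m2 + c * (S1b * S2a) ≤
      ∑ y1, ∑ y2, wgt (pconv P1 P2) (y1, y2) * nent (cnd (pconv P1 P2) (y1, y2)) := by
    have hterm : ∀ y1 y2,
        wgt P1 y1 * (wgt P2 y2 * nent (cnd P2 y2))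
          + c * ((wgt P1 y1 * max 0 (nent (cnd P1 y1) - η))
            * (wgt P2 y2 * max 0 (1 - nent (cnd P2 y2) - η)))
        ≤ wgt (pconv P1 P2) (y1, y2) * nent (cnd (pconv P1 P2) (y1, y2)) := by
      intro y1 y2
      rw [wgt_pconv]
      rcases eq_or_lt_of_le (hw1n y1) with h1 | h1
      · rw [← h1]; simp
      rcases eq_or_lt_of_le (hw2n y2) with h2 | h2
      · rw [← h2]; simp
      rw [cnd_pconv h1.ne' h2.ne', conv_comm]
      have hkey := key hq hη0 hM0 hM (isDist_cnd h2n h2.ne') (isDist_cnd h1n h1.ne')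
      calc wgt P1 y1 * (wgt P2 y2 * nent (cnd P2 y2))
          + c * ((wgt P1 y1 * max 0 (nent (cnd P1 y1) - η))
            * (wgt P2 y2 * max 0 (1 - nent (cnd P2 y2) - η)))
          = (wgt P1 y1 * wgt P2 y2) * (nent (cnd P2 y2)
            + c * (max 0 (1 - nent (cnd P2 y2) - η) * max 0 (nent (cnd P1 y1) - η))) := by
            ring
        _ ≤ (wgt P1 y1 * wgt P2 y2) * nent (conv (cnd P2 y2) (cnd P1 y1)) := by
            apply mul_le_mul_of_nonneg_left hkey
            exact mul_nonneg (hw1n y1) (hw2n y2)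
    calc m2 + c * (S1b * S2a)
        = ∑ y1, ∑ y2, (wgt P1 y1 * (wgt P2 y2 * nent (cnd P2 y2))
          + c * ((wgt P1 y1 * max 0 (nent (cnd P1 y1) - η))
            * (wgt P2 y2 * max 0 (1 - nent (cnd P2 y2) - η)))) := by
          rw [bigsum, hw1s, one_mul]
      _ ≤ _ := Finset.sum_le_sum fun y1 _ => Finset.sum_le_sum fun y2 _ => hterm y1 y2
  -- finish
  have hprod1 : η * η ≤ S1a * S2b :=
    mul_le_mul hS1a_ge hS2b_ge hη0.le (le_trans hη0.le hS1a_ge)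
  have hprod2 : η * η ≤ S1b * S2a :=
    mul_le_mul hS1b_ge hS2a_ge hη0.le (le_trans hη0.le hS1b_ge)
  have he1 := mul_le_mul_of_nonneg_left hprod1 hc0.le
  have he2 := mul_le_mul_of_nonneg_left hprod2 hc0.le
  have hmax := max_le (show m1 ≤ (∑ y1, ∑ y2, wgt (pconv P1 P2) (y1, y2)
      * nent (cnd (pconv P1 P2) (y1, y2))) - c * (η * η) by linarith)
    (show m2 ≤ (∑ y1, ∑ y2, wgt (pconv P1 P2) (y1, y2)
      * nent (cnd (pconv P1 P2) (y1, y2))) - c * (η * η) by linarith)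
  rw [ge_iff_le]
  linarith
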